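/- Let p be a prime with p ≡ 1 (mod 4), let e be an even positive integer, and set n = p^e. Then the discriminant of F_n(x) is the square of a rational number if and only if the integer 𝒫_n = ∏_θ F̃_n(θ) (θ ranging over the nontrivial n-th roots of unity in ℂ) is the square of an integer. -/

import Mathlib

open Polynomial BigOperators

/-- `F n` is the truncated logarithmic polynomial `1 + x + x²/2 + ⋯ + xⁿ/n ∈ ℚ[x]`. -/
noncomputable def F (n : ℕ) : Polynomial ℚ :=
  1 + ∑ k ∈ Finset.Icc 1 n, Polynomial.C ((k : ℚ)⁻¹) * Polynomial.X ^ k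

/-- `Ln n = lcm {1, 2, …, n}`. -/
def Ln (n : ℕ) : ℕ := (Finset.Icc 1 n).lcm id

/-- `Ftilde n = Ln n • F n`, a polynomial with integer coefficients. -/
noncomputable def Ftilde (n : ℕ) : Polynomial ℚ := Polynomial.C ((Ln n : ℚ)) * F n

/-- The resultant `Res(P, Q)` of two polynomials over `ℚ`, computed in `ℂ` via the
product formula `Res(P,Q) = lc(P)^(deg Q) * ∏_{P(r)=0} Q(r)` (roots with multiplicity). -/
noncomputable def resC (P Q : Polynomial ℚ) : ℂ :=
  ((P.leadingCoeff : ℂ)) ^ Q.natDegree *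
    ((P.map (algebraMap ℚ ℂ)).roots.map (fun r => (Q.map (algebraMap ℚ ℂ)).eval r)).prod

/-- The discriminant `disc P = (−1)^(n(n−1)/2) ⬝ a_n⁻¹ ⬝ Res(P, P′)`, as a complex number. -/
noncomputable def discC (P : Polynomial ℚ) : ℂ :=
  (-1) ^ (P.natDegree.choose 2) * ((P.leadingCoeff : ℂ))⁻¹ * resC P (Polynomial.derivative P)

/-- `𝒫 n = ∏_θ F̃_n(θ)`, the product over the nontrivial `n`-th roots of unity in `ℂ`. -/
noncomputable def P (n : ℕ) : ℂ :=
  ∏ θ ∈ (Polynomial.nthRootsFinset n (1 : ℂ)).erase 1, (Polynomial.aeval θ) (Ftilde n)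

/-- `Xc m ω = ∏_{k=1}^{m−1} (1/m + ω^k + ω^{2k}/2 + ⋯ + ω^{(m−1)k}/(m−1))`. -/
noncomputable def Xc (m : ℕ) (ω : ℂ) : ℂ :=
  ∏ k ∈ Finset.Icc 1 (m - 1), ((m : ℂ)⁻¹ + ∑ j ∈ Finset.Icc 1 (m - 1), ω ^ (j * k) / (j : ℂ))

/-- `Y m = 1 + 1/2 + ⋯ + 1/m ∈ ℚ`. -/
def Y (m : ℕ) : ℚ := ∑ j ∈ Finset.Icc 1 m, (j : ℚ)⁻¹


/- ### auxiliary lemmas -/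

lemma F_natDegree_le (n : ℕ) : (F n).natDegree ≤ n := by
  apply le_trans (natDegree_add_le _ _)
  simp only [natDegree_one, max_le_iff]
  refine ⟨Nat.zero_le _, ?_⟩
  apply le_trans (natDegree_sum_le _ _)
  simp only [Finset.fold_max_le]
  refine ⟨Nat.zero_le _, fun k hk => ?_⟩
  exact le_trans (natDegree_C_mul_le _ _) (by simp [Finset.mem_Icc.mp hk |>.2])

lemma F_coeff_n {n : ℕ} (hn : 1 ≤ n) : (F n).coeff n = (n : ℚ)⁻¹ := by
  simp only [F, coeff_add, coeff_one, finset_sum_coeff, coeff_C_mul, coeff_X_pow]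
  rw [Finset.sum_eq_single n (fun b _ hb => by simp [Ne.symm hb])
    (fun h => absurd (Finset.mem_Icc.mpr ⟨hn, le_rfl⟩) h)]
  simp; omega

lemma F_natDegree {n : ℕ} (hn : 1 ≤ n) : (F n).natDegree = n := by
  refine le_antisymm (F_natDegree_le n) ?_
  apply Polynomial.le_natDegree_of_ne_zero
  rw [F_coeff_n hn]
  simp; omega

lemma F_leadingCoeff {n : ℕ} (hn : 1 ≤ n) : (F n).leadingCoeff = (n : ℚ)⁻¹ := by
  rw [leadingCoeff, F_natDegree hn, F_coeff_n hn]

lemma F_derivative (n : ℕ) : derivative (F n) = ∑ k ∈ Finset.range n, Polynomial.X ^ k := by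
  simp only [F, derivative_add, derivative_one, zero_add, derivative_sum,
    derivative_C_mul_X_pow]
  rw [show Finset.Icc 1 n = Finset.Ico 1 (n+1) by rfl, Finset.sum_Ico_eq_sum_range]
  apply Finset.sum_congr (by rw [Nat.add_sub_cancel])
  intro i hi
  have h : ((1 + i : ℕ) : ℚ) ≠ 0 := by positivity
  rw [show (1 + i) - 1 = i by omega, inv_mul_cancel₀ h]
  simp

lemma geom_natDegree {n : ℕ} (hn : 1 ≤ n) :
    (∑ k ∈ Finset.range n, (Polynomial.X : ℚ[X]) ^ k).natDegree = n - 1 := by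
  refine le_antisymm ?_ ?_
  · apply le_trans (natDegree_sum_le _ _)
    simp only [Finset.fold_max_le]
    refine ⟨Nat.zero_le _, fun k hk => by simp at hk ⊢; omega⟩
  · apply Polynomial.le_natDegree_of_ne_zero
    simp only [finset_sum_coeff, coeff_X_pow]
    rw [Finset.sum_eq_single (n-1) (fun b _ hb => by simp [Ne.symm hb]) (by simp; omega)]
    simp

lemma F_derivative_natDegree {n : ℕ} (hn : 1 ≤ n) : (derivative (F n)).natDegree = n - 1 := by
  rw [F_derivative]; exact geom_natDegree hn

lemma Ln_ne_zero (n : ℕ) : Ln n ≠ 0 := by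
  unfold Ln
  rw [Ne, Finset.lcm_eq_zero_iff]
  simp only [Set.mem_image, Finset.mem_coe, Finset.mem_Icc, id_eq]
  rintro ⟨x, ⟨h1, h2⟩, rfl⟩
  omega

lemma dvd_Ln {n k : ℕ} (h1 : 1 ≤ k) (h2 : k ≤ n) : k ∣ Ln n :=
  Finset.dvd_lcm (Finset.mem_Icc.mpr ⟨h1, h2⟩)

lemma multiset_finset_prod_swap (M : Multiset ℂ) (S : Finset ℂ) :
    (M.map (fun r => ∏ θ ∈ S, (r - θ))).prod = ∏ θ ∈ S, (M.map (fun r => r - θ)).prod := by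
  induction S using Finset.cons_induction with
  | empty => simp
  | cons a S ha ih => simp only [Finset.prod_cons, ← ih, ← Multiset.prod_map_mul]

lemma multiset_prod_map_neg (M : Multiset ℂ) (f : ℂ → ℂ) :
    (M.map (fun r => - f r)).prod = (-1) ^ Multiset.card M * (M.map f).prod := by
  induction M using Multiset.induction with
  | empty => simp
  | cons a M ih => simp [ih]; ring

lemma geom_prod (n : ℕ) (hn : n ≠ 0) :
    (∑ k ∈ Finset.range n, (X:ℂ[X])^k) = ∏ θ ∈ (nthRootsFinset n (1 : ℂ)).erase 1, (X - C θ) := by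
  have hζ := Complex.isPrimitiveRoot_exp n hn
  have h1 : (1:ℂ) ∈ nthRootsFinset n (1 : ℂ) := one_mem_nthRootsFinset (Nat.pos_of_ne_zero hn)
  have key : ((X:ℂ[X]) - C 1) * ∑ k ∈ Finset.range n, (X:ℂ[X])^k
      = (X - C 1) * ∏ θ ∈ (nthRootsFinset n (1 : ℂ)).erase 1, (X - C θ) := by
    rw [Finset.mul_prod_erase _ (fun θ => X - C θ) h1,
      ← X_pow_sub_one_eq_prod (Nat.pos_of_ne_zero hn) hζ]
    rw [mul_comm, map_one, geom_sum_mul]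
  exact mul_left_cancel₀ (by exact X_sub_C_ne_zero 1) key

lemma card_S {n : ℕ} (hn : 1 ≤ n) : ((nthRootsFinset n (1 : ℂ)).erase 1).card = n - 1 := by
  have hζ := Complex.isPrimitiveRoot_exp n (by omega)
  rw [Finset.card_erase_of_mem (one_mem_nthRootsFinset (by omega)), hζ.card_nthRootsFinset]

lemma key_disc {n : ℕ} (hn : 1 ≤ n) :
    discC (F n) = (-1) ^ (n.choose 2) * (n : ℂ) * ((Ln n : ℂ) ^ (n - 1))⁻¹ * P n := by
  classical
  set S := (nthRootsFinset n (1 : ℂ)).erase 1 with hS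
  set f := (F n).map (algebraMap ℚ ℂ) with hf
  set g := (derivative (F n)).map (algebraMap ℚ ℂ) with hgdef
  set R := f.roots with hR
  have hn0 : (n : ℂ) ≠ 0 := Nat.cast_ne_zero.mpr (by omega)
  have hnq : (n : ℚ) ≠ 0 := Nat.cast_ne_zero.mpr (by omega)
  have hL : (Ln n : ℂ) ≠ 0 := by exact_mod_cast Nat.cast_ne_zero.mpr (Ln_ne_zero n)
  have hdegf : f.natDegree = n := by rw [hf, natDegree_map, F_natDegree hn]
  have hlcf : f.leadingCoeff = (n : ℂ)⁻¹ := by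
    rw [hf, leadingCoeff_map, F_leadingCoeff hn]
    push_cast; ring
  have hcardR : Multiset.card R = n := by
    rw [hR, ← (IsAlgClosed.splits f).natDegree_eq_card_roots,
      hdegf]
  have hfactor : C ((n:ℂ)⁻¹) * (R.map (fun r => X - C r)).prod = f := by
    have := C_leadingCoeff_mul_prod_multiset_X_sub_C (p := f) (by rw [hcardR, hdegf])
    rwa [hlcf] at this
  have hg : g = ∏ θ ∈ S, (X - C θ) := by
    rw [hgdef, F_derivative, Polynomial.map_sum]
    simp only [Polynomial.map_pow, map_X]
    exact geom_prod n (by omega)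
  have heval_g : ∀ r : ℂ, g.eval r = ∏ θ ∈ S, (r - θ) := by
    intro r; rw [hg, eval_prod]; simp
  have heval_f : ∀ θ : ℂ, (R.map (fun r => θ - r)).prod = n * f.eval θ := by
    intro θ
    have h := congrArg (eval θ) hfactor
    rw [eval_mul, eval_C, eval_multiset_prod, Multiset.map_map] at h
    simp only [Function.comp, eval_sub, eval_X, eval_C] at h
    rw [← h]
    field_simp
  -- the product of g over the roots of f
  have main : (R.map (fun r => g.eval r)).prod
      = ((-1) ^ n * n) ^ (n - 1) * ∏ θ ∈ S, f.eval θ := by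
    rw [Multiset.map_congr rfl (fun r _ => heval_g r), multiset_finset_prod_swap]
    have step : ∀ θ ∈ S, (R.map (fun r => r - θ)).prod = ((-1)^n * n) * f.eval θ := by
      intro θ _
      have : (R.map (fun r => r - θ)).prod = (R.map (fun r => -(θ - r))).prod := by
        congr 1; apply Multiset.map_congr rfl; intros; ring
      rw [this, multiset_prod_map_neg, hcardR, heval_f θ, mul_assoc]
    rw [Finset.prod_congr rfl step, Finset.prod_mul_distrib, Finset.prod_const, card_S hn]
  -- P n in terms of f
  have hP : P n = (Ln n : ℂ) ^ (n - 1) * ∏ θ ∈ S, f.eval θ := by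
    unfold P Ftilde
    rw [← hS]
    have : ∀ θ ∈ S, (aeval θ) (C ((Ln n : ℚ)) * F n) = (Ln n : ℂ) * f.eval θ := by
      intro θ _
      rw [map_mul, aeval_C, aeval_def, ← eval_map, ← hf]
      norm_num
    rw [Finset.prod_congr rfl this, Finset.prod_mul_distrib, Finset.prod_const, card_S hn]
  -- assemble
  unfold discC resC
  rw [F_natDegree hn, F_leadingCoeff hn, F_derivative_natDegree hn, ← hf, ← hgdef, ← hR,
    main, hP]
  have hcast : (((n : ℚ)⁻¹ : ℚ) : ℂ) = (n : ℂ)⁻¹ := by push_cast; ring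
  rw [hcast]
  have hsign : ((-1 : ℂ) ^ n) ^ (n - 1) = 1 := by
    rcases Nat.even_or_odd n with h | h
    · rw [h.neg_one_pow, one_pow]
    · have h1 : Even (n - 1) := by rcases h with ⟨k, hk⟩; exact ⟨k, by omega⟩
      rw [← pow_mul]
      exact (h1.mul_left n).neg_one_pow
  rw [mul_pow ((-1:ℂ)^n) (n:ℂ), hsign, one_mul]
  field_simp
  rw [← mul_pow, one_div, inv_mul_cancel₀ hn0, one_pow, one_mul]

lemma theta_integral {n : ℕ} (hn : 1 ≤ n) {θ : ℂ} (hθ : θ ∈ nthRootsFinset n (1 : ℂ)) :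
    IsIntegral ℤ θ := by
  refine ⟨X ^ n - C 1, monic_X_pow_sub_C 1 (by omega), ?_⟩
  have := (mem_nthRootsFinset (by omega : 0 < n) 1).mp hθ
  simp [eval₂_sub, eval₂_pow, this]

lemma P_isIntegral {n : ℕ} (hn : 1 ≤ n) : IsIntegral ℤ (P n) := by
  rw [← mem_integralClosure_iff]
  unfold P
  apply Subalgebra.prod_mem
  intro θ hθ
  have hθi : θ ∈ integralClosure ℤ ℂ := by
    rw [mem_integralClosure_iff]
    exact theta_integral hn (Finset.mem_of_mem_erase hθ)
  have key : (aeval θ) (Ftilde n)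
      = (Ln n : ℂ) + ∑ k ∈ Finset.Icc 1 n, ((Ln n / k : ℕ) : ℂ) * θ ^ k := by
    unfold Ftilde F
    rw [map_mul, aeval_C]
    rw [map_add, map_one, map_sum]
    simp only [map_mul, aeval_C, map_pow, aeval_X]
    rw [mul_add, mul_one, Finset.mul_sum]
    congr 1
    apply Finset.sum_congr rfl
    intro k hk
    obtain ⟨h1, h2⟩ := Finset.mem_Icc.mp hk
    have hdvd : k ∣ Ln n := dvd_Ln h1 h2
    have hk0 : (k : ℂ) ≠ 0 := Nat.cast_ne_zero.mpr (by omega)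
    rw [Nat.cast_div hdvd hk0]
    push_cast
    field_simp
  rw [key]
  apply Subalgebra.add_mem
  · exact Subalgebra.natCast_mem _ _
  · apply Subalgebra.sum_mem
    intro k _
    exact Subalgebra.mul_mem _ (Subalgebra.natCast_mem _ _) (Subalgebra.pow_mem _ hθi _)

lemma rat_descent {q : ℚ} (h : IsIntegral ℤ ((q : ℂ) ^ 2)) : ∃ z : ℤ, (z : ℚ) = q := by
  have h1 : IsIntegral ℤ ((q ^ 2 : ℚ)) := by
    apply IsIntegral.tower_bot_of_field (B := ℂ)
    have : (algebraMap ℚ ℂ) (q ^ 2) = (q : ℂ) ^ 2 := by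
      rw [eq_ratCast]; push_cast; ring
    rwa [this]
  obtain ⟨m, hm⟩ := IsIntegrallyClosed.isIntegral_iff.mp h1
  have h2 : IsIntegral ℤ q := by
    refine ⟨X ^ 2 - C m, monic_X_pow_sub_C m (by norm_num), ?_⟩
    rw [eval₂_sub, eval₂_pow, eval₂_X, eval₂_C]
    rw [hm]
    ring
  exact IsIntegrallyClosed.isIntegral_iff.mp h2


/-- If `p ≡ 1 (mod 4)` is prime, `e` is an even positive integer and `n = p^e`,
then `disc(F n)` is a rational square iff `𝒫 n` is the square of an integer. -/
theorem stmt7 (p e n : ℕ) (hp : p.Prime) (hp4 : p % 4 = 1) (he : 0 < e) (hee : Even e)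
    (hn : n = p ^ e) :
    (∃ r : ℚ, (r : ℂ) ^ 2 = discC (F n)) ↔ (∃ z : ℤ, ((z : ℂ)) ^ 2 = P n) := by
  have hp5 : 5 ≤ p := by
    have := hp.two_le
    omega
  have hn1 : 1 ≤ n := by subst hn; exact Nat.one_le_pow _ _ (by omega)
  have hn4 : n % 4 = 1 := by
    subst hn
    rw [Nat.pow_mod, hp4, one_pow]
    rfl
  have hch : (-1 : ℂ) ^ (n.choose 2) = 1 := by
    have hev : Even (n.choose 2) := by
      rw [Nat.choose_two_right]
      obtain ⟨k, hk⟩ : ∃ k, n = 4 * k + 1 := ⟨n / 4, by omega⟩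
      refine ⟨(4 * k + 1) * k, ?_⟩
      subst hk
      rw [show (4 * k + 1) - 1 = 4 * k by omega,
        show (4 * k + 1) * (4 * k) = ((4 * k + 1) * k + (4 * k + 1) * k) * 2 by ring,
        Nat.mul_div_cancel _ (by norm_num)]
    exact hev.neg_one_pow
  obtain ⟨a, ha⟩ := hee
  obtain ⟨b, hb⟩ : ∃ b, n - 1 = b + b := ⟨(n - 1) / 2, by
    have : n % 2 = 1 := by omega
    omega⟩
  set c : ℚ := (p : ℚ) ^ a * ((Ln n : ℚ) ^ b)⁻¹ with hc
  have hp0 : ((p : ℂ)) ≠ 0 := Nat.cast_ne_zero.mpr (by omega)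
  have hL0 : ((Ln n : ℂ)) ≠ 0 := Nat.cast_ne_zero.mpr (Ln_ne_zero n)
  have hcsq : ((c : ℚ) : ℂ) ^ 2 = (n : ℂ) * ((Ln n : ℂ) ^ (n - 1))⁻¹ := by
    have h1 : (n : ℂ) = ((p : ℂ) ^ a) ^ 2 := by
      rw [hn, ha]; push_cast; rw [pow_add]; ring
    have h2 : ((Ln n : ℂ)) ^ (n - 1) = ((Ln n : ℂ) ^ b) ^ 2 := by
      rw [hb, pow_add]; ring
    rw [h1, h2, hc]
    push_cast
    field_simp
  have hkey : discC (F n) = ((c : ℚ) : ℂ) ^ 2 * P n := by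
    rw [key_disc hn1, hch, one_mul, ← hcsq]
  have hc0 : ((c : ℚ) : ℂ) ≠ 0 := by
    rw [hc]
    push_cast
    exact mul_ne_zero (pow_ne_zero _ hp0) (inv_ne_zero (pow_ne_zero _ hL0))
  constructor
  · rintro ⟨r, hr⟩
    have hq : (((r / c : ℚ)) : ℂ) ^ 2 = P n := by
      have h3 : ((r : ℂ)) ^ 2 = ((c : ℚ) : ℂ) ^ 2 * P n := hr.trans hkey
      rw [Rat.cast_div, div_pow, h3, mul_div_cancel_left₀ _ (pow_ne_zero 2 hc0)]
    have hint : IsIntegral ℤ ((((r / c : ℚ)) : ℂ) ^ 2) := by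
      rw [hq]; exact P_isIntegral hn1
    obtain ⟨z, hz⟩ := rat_descent hint
    refine ⟨z, ?_⟩
    have : ((z : ℚ) : ℂ) = (z : ℂ) := by push_cast; ring
    rw [← this, hz, hq]
  · rintro ⟨z, hz⟩
    refine ⟨c * z, ?_⟩
    push_cast
    rw [mul_pow, hz, hkey]
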